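/- Fix integers r ≥ 2 and t ≥ 1, and let m be any integer with t ≤ 2^m − 1. Let C_t^{(m)} be the binary linear code with parity check matrix H_t^{(m)}. Then C_t^{(m)} is an (n, k, r, t)-SLRC with length n = |Ω_t^{(m)}| = r^m · Σ_{s=0}^{t} r^{−|supp_m(s)|} and dimension k = r^m; hence its rate is k/n = 1 / (Σ_{s=0}^{t} r^{−|supp_m(s)|}). -/

import Mathlib

open Finset

/-- `R` is a recovering set of coordinate `i` for the linear code `C`. -/
def IsRecoveringSet {F : Type*} [Field F] {ι : Type*} [Fintype ι] [DecidableEq ι]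
    (C : Submodule F (ι → F)) (i : ι) (R : Finset ι) : Prop :=
  i ∉ R ∧ ∃ a : ι → F, (∀ j ∈ R, a j ≠ 0) ∧ ∀ x ∈ C, x i = ∑ j ∈ R, a j * x j

/-- `C` is an `(n,k,r,t)`-sequential locally repairable code. -/
def IsSLRC {F : Type*} [Field F] {ι : Type*} [Fintype ι] [DecidableEq ι]
    (C : Submodule F (ι → F)) (r t : ℕ) : Prop :=
  ∀ E : Finset ι, E.card ≤ t →
    ∃ L : List ι, L.Nodup ∧ L.toFinset = E ∧
      ∀ ℓ : Fin L.length, ∃ R : Finset ι,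
        IsRecoveringSet C (L.get ℓ) R ∧ R.card ≤ r ∧
        R ⊆ Eᶜ ∪ (L.take ℓ.1).toFinset

/-- `supp_m(s)`: the support of the `m`-digit binary representation of `s`,
with digit `ℓ` (0-indexed) corresponding to `2^ℓ`. -/
def suppm (m s : ℕ) : Finset (Fin m) :=
  Finset.univ.filter (fun ℓ => s.testBit ℓ.val)

/-- `U(α) = {ℓ ∈ [m] : α_ℓ = r}`, for `α ∈ Z_{r+1}^m`. -/
def Uset (r m : ℕ) (α : Fin m → Fin (r + 1)) : Finset (Fin m) :=
  Finset.univ.filter (fun ℓ => (α ℓ : ℕ) = r)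

/-- `L(α) = {β ∈ Z_r^m : β_ℓ = α_ℓ for all ℓ with α_ℓ < r}`, with
`Z_r ⊆ Z_{r+1}` viewed as the elements of value `< r`. -/
def Lset (r m : ℕ) (α : Fin m → Fin (r + 1)) : Finset (Fin m → Fin (r + 1)) :=
  Finset.univ.filter (fun β =>
    (∀ ℓ, (β ℓ : ℕ) < r) ∧ ∀ ℓ, (α ℓ : ℕ) < r → β ℓ = α ℓ)

/-- `Γ_s = {α ∈ Z_{r+1}^m : U(α) = supp_m(s)}`. -/
def Gam (r m s : ℕ) : Finset (Fin m → Fin (r + 1)) :=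
  Finset.univ.filter (fun α => Uset r m α = suppm m s)

/-- `Ω_t^{(m)} = ⋃_{s=0}^{t} Γ_s`. -/
def Omeg (r m t : ℕ) : Finset (Fin m → Fin (r + 1)) :=
  (Finset.range (t + 1)).biUnion (Gam r m)

/-- The coordinate index set `Ω_t^{(m)}` as a type. -/
abbrev OmegIdx (r m t : ℕ) : Type := {α : Fin m → Fin (r + 1) // α ∈ Omeg r m t}

/-- The columns of the row of `H_t^{(m)}` indexed by `α`, other than `α` itself:
the coordinates in `Ω_t^{(m)}` whose index lies in `L(α)`. -/
def LIdx (r m t : ℕ) (α : Fin m → Fin (r + 1)) : Finset (OmegIdx r m t) :=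
  Finset.univ.filter (fun β => β.1 ∈ Lset r m α)

/-- The binary code `C_t^{(m)}` with parity check matrix `H_t^{(m)}`: the codewords
are exactly the `x` with `x_α = ∑_{β ∈ L(α)} x_β` for all `α ∈ Ω_t^{(m)} \ Ω_0^{(m)}`. -/
def CodeC (r m t : ℕ) : Submodule (ZMod 2) (OmegIdx r m t → ZMod 2) where
  carrier := {x | ∀ α : OmegIdx r m t, α.1 ∉ Omeg r m 0 →
    x α = ∑ β ∈ LIdx r m t α.1, x β}
  add_mem' := by
    intro a b ha hb α hα
    simp only [Pi.add_apply, ha α hα, hb α hα, Finset.sum_add_distrib]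
  zero_mem' := by
    intro α hα
    simp
  smul_mem' := by
    intro c x hx α hα
    simp only [Pi.smul_apply, smul_eq_mul, hx α hα, Finset.mul_sum]


lemma testBit_sum_pow (T : Finset ℕ) : ∀ j, (∑ i ∈ T, 2^i).testBit j ↔ j ∈ T := by
  induction T using Finset.induction_on_max with
  | empty => simp
  | insert a s ha ih =>
    have hs : ∑ i ∈ s, 2^i < 2^a := by
      apply Nat.lt_pow_two_of_testBit
      intro i hi
      rw [Bool.eq_false_iff, ne_eq, ih i]
      intro hmem
      exact absurd (ha i hmem) (by omega)
    intro j
    rw [Finset.sum_insert (fun h => absurd (ha a h) (lt_irrefl a))]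
    rcases lt_trichotomy j a with h | h | h
    · rw [Nat.testBit_two_pow_add_gt h, ih j]
      simp only [Finset.mem_insert]
      constructor
      · exact Or.inr
      · rintro (rfl | h2)
        · omega
        · exact h2
    · subst h
      rw [Nat.testBit_two_pow_add_eq]
      have : (∑ i ∈ s, 2^i).testBit j = false := by
        rw [Bool.eq_false_iff, ne_eq, ih j]; intro hm; exact absurd (ha j hm) (lt_irrefl j)
      simp [this, Finset.mem_insert]
    · have hlt : 2^a + ∑ i ∈ s, 2^i < 2^j := by
        calc 2^a + ∑ i ∈ s, 2^i < 2^a + 2^a := by omega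
        _ = 2^(a+1) := by ring
        _ ≤ 2^j := Nat.pow_le_pow_right (by norm_num) (by omega)
      rw [Nat.testBit_lt_two_pow hlt]
      simp only [Finset.mem_insert, Bool.false_eq_true, false_iff]
      rintro (rfl | hm)
      · omega
      · exact absurd (ha j hm) (by omega)

lemma testBit_sum_pow_fin {m : ℕ} (S : Finset (Fin m)) (j : ℕ) :
    (∑ ℓ ∈ S, 2^(ℓ:ℕ)).testBit j ↔ ∃ ℓ ∈ S, (ℓ:ℕ) = j := by
  have himg : ∑ ℓ ∈ S, 2^(ℓ:ℕ) = ∑ i ∈ S.image (Fin.val), 2^i := by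
    rw [Finset.sum_image (fun a _ b _ h => Fin.val_injective h)]
  rw [himg, testBit_sum_pow, Finset.mem_image]

lemma sum_suppm {m : ℕ} (s : ℕ) (h : s < 2^m) : ∑ i ∈ suppm m s, 2^(i:ℕ) = s := by
  apply Nat.eq_of_testBit_eq
  intro j
  rw [Bool.eq_iff_iff, testBit_sum_pow_fin]
  by_cases hj : j < m
  · simp only [suppm, Finset.mem_filter, Finset.mem_univ, true_and]
    by_cases hb : s.testBit j
    · simp only [hb, iff_true]
      exact ⟨⟨j, hj⟩, hb, rfl⟩
    · simp only [hb, Bool.false_eq_true, iff_false]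
      rintro ⟨ℓ, hℓ, rfl⟩
      exact hb hℓ
  · have : s.testBit j = false := Nat.testBit_lt_two_pow (lt_of_lt_of_le h (Nat.pow_le_pow_right (by norm_num) (by omega)))
    simp only [this, Bool.false_eq_true, iff_false]
    rintro ⟨ℓ, hℓ, rfl⟩
    simp [suppm] at hℓ
    exact hj (by exact ℓ.isLt) |>.elim

def lev (r m : ℕ) (α : Fin m → Fin (r + 1)) : ℕ := ∑ ℓ ∈ Uset r m α, 2^(ℓ:ℕ)

lemma uset_eq_suppm_lev (r m : ℕ) (α : Fin m → Fin (r + 1)) :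
    Uset r m α = suppm m (lev r m α) := by
  ext i
  simp only [suppm, Finset.mem_filter, Finset.mem_univ, true_and, lev, testBit_sum_pow_fin]
  constructor
  · intro h; exact ⟨i, h, rfl⟩
  · rintro ⟨ℓ, hℓ, h⟩
    rwa [show i = ℓ from Fin.ext h.symm]

lemma mem_Omeg_iff {r m t : ℕ} (ht2 : t ≤ 2 ^ m - 1) (α : Fin m → Fin (r + 1)) :
    α ∈ Omeg r m t ↔ lev r m α ≤ t := by
  have h2m : 0 < 2 ^ m := Nat.pow_pos (by norm_num)
  constructor
  · intro h
    simp only [Omeg, Finset.mem_biUnion, Finset.mem_range] at h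
    obtain ⟨s, hs, hg⟩ := h
    simp only [Gam, Finset.mem_filter, Finset.mem_univ, true_and] at hg
    have : lev r m α = s := by
      rw [lev, hg, sum_suppm s (by omega)]
    omega
  · intro h
    simp only [Omeg, Finset.mem_biUnion, Finset.mem_range]
    exact ⟨lev r m α, by omega, by
      simp only [Gam, Finset.mem_filter, Finset.mem_univ, true_and]
      exact uset_eq_suppm_lev r m α⟩

lemma lev_eq_zero_iff {r m : ℕ} (α : Fin m → Fin (r + 1)) :
    lev r m α = 0 ↔ ∀ ℓ, (α ℓ : ℕ) < r := by
  rw [lev, Finset.sum_eq_zero_iff]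
  constructor
  · intro h ℓ
    have hle : (α ℓ : ℕ) ≤ r := Nat.lt_succ_iff.mp (α ℓ).isLt
    rcases Nat.lt_or_ge (α ℓ : ℕ) r with h' | h'
    · exact h'
    · have hmem : ℓ ∈ Uset r m α := by
        simp only [Uset, Finset.mem_filter, Finset.mem_univ, true_and]; omega
      have h2 := h ℓ hmem
      have h3 : 0 < 2^(ℓ:ℕ) := Nat.pow_pos (by norm_num)
      omega
  · intro h ℓ hℓ
    simp only [Uset, Finset.mem_filter, Finset.mem_univ, true_and] at hℓ
    exact absurd hℓ (by have := h ℓ; omega)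

lemma mem_Omeg0_iff {r m : ℕ} (α : Fin m → Fin (r + 1)) :
    α ∈ Omeg r m 0 ↔ ∀ ℓ, (α ℓ : ℕ) < r := by
  rw [mem_Omeg_iff (by positivity) α, Nat.le_zero, lev_eq_zero_iff]

lemma Omeg0_subset {r m t : ℕ} : Omeg r m 0 ⊆ Omeg r m t := by
  intro α hα
  simp only [Omeg, Finset.mem_biUnion, Finset.mem_range] at hα ⊢
  obtain ⟨s, hs, h⟩ := hα
  exact ⟨s, by omega, h⟩

lemma Lset_self {r m : ℕ} (β : Fin m → Fin (r + 1)) (h : ∀ ℓ, (β ℓ : ℕ) < r) :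
    Lset r m β = {β} := by
  ext γ
  simp only [Lset, Finset.mem_filter, Finset.mem_univ, true_and, Finset.mem_singleton]
  constructor
  · rintro ⟨h1, h2⟩
    funext ℓ
    exact h2 ℓ (h ℓ)
  · rintro rfl
    exact ⟨h, fun ℓ _ => rfl⟩

lemma code_eq {r m t : ℕ} {x : OmegIdx r m t → ZMod 2}
    (hx : x ∈ CodeC r m t) (α : OmegIdx r m t) :
    x α = ∑ β ∈ LIdx r m t α.1, x β := by
  by_cases h0 : α.1 ∈ Omeg r m 0
  · have hall := (mem_Omeg0_iff α.1).mp h0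
    have : LIdx r m t α.1 = {α} := by
      ext β
      simp only [LIdx, Finset.mem_filter, Finset.mem_univ, true_and,
        Lset_self α.1 hall, Finset.mem_singleton]
      exact ⟨fun h => Subtype.ext h, fun h => by rw [h]⟩
    rw [this, Finset.sum_singleton]
  · exact hx α h0

lemma Lset_update_last {r m : ℕ} (α : Fin m → Fin (r + 1)) (ℓ : Fin m) :
    Lset r m (Function.update α ℓ (Fin.last r)) =
      (Finset.univ : Finset (Fin r)).biUnion
        (fun j => Lset r m (Function.update α ℓ j.castSucc)) := by
  ext β
  simp only [Lset, Finset.mem_filter, Finset.mem_univ, true_and, Finset.mem_biUnion]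
  constructor
  · rintro ⟨h1, h2⟩
    refine ⟨⟨(β ℓ : ℕ), h1 ℓ⟩, h1, fun i hi => ?_⟩
    by_cases hiℓ : i = ℓ
    · subst hiℓ
      rw [Function.update_self]
      exact Fin.ext rfl
    · rw [Function.update_of_ne hiℓ] at hi ⊢
      have h3 := h2 i (by rwa [Function.update_of_ne hiℓ])
      rwa [Function.update_of_ne hiℓ] at h3
  · rintro ⟨j, h1, h2⟩
    refine ⟨h1, fun i hi => ?_⟩
    by_cases hiℓ : i = ℓ
    · subst hiℓ
      rw [Function.update_self] at hi
      simp [Fin.val_last] at hi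
    · rw [Function.update_of_ne hiℓ] at hi ⊢
      have h3 := h2 i (by rwa [Function.update_of_ne hiℓ])
      rwa [Function.update_of_ne hiℓ] at h3

lemma line_sum {r m t : ℕ} {x : OmegIdx r m t → ZMod 2} (hx : x ∈ CodeC r m t)
    (α : Fin m → Fin (r + 1)) (ℓ : Fin m)
    (h : ∀ j : Fin (r + 1), Function.update α ℓ j ∈ Omeg r m t) :
    ∑ j : Fin (r + 1), x ⟨Function.update α ℓ j, h j⟩ = 0 := by
  have hdisj : (↑(Finset.univ : Finset (Fin r)) : Set (Fin r)).PairwiseDisjoint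
      (fun j : Fin r => LIdx r m t (Function.update α ℓ j.castSucc)) := by
    intro a _ b _ hab
    simp only [Function.onFun]
    rw [Finset.disjoint_left]
    intro β hβa hβb
    simp only [LIdx, Lset, Finset.mem_filter, Finset.mem_univ, true_and] at hβa hβb
    apply hab
    have ha' : β.1 ℓ = a.castSucc := by
      have := hβa.2 ℓ (by rw [Function.update_self]; exact a.isLt)
      rwa [Function.update_self] at this
    have hb' : β.1 ℓ = b.castSucc := by
      have := hβb.2 ℓ (by rw [Function.update_self]; exact b.isLt)
      rwa [Function.update_self] at this
    have : a.castSucc = b.castSucc := ha' ▸ hb'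
    exact Fin.castSucc_injective r this
  have hbi : LIdx r m t (Function.update α ℓ (Fin.last r)) =
      (Finset.univ : Finset (Fin r)).biUnion
        (fun j => LIdx r m t (Function.update α ℓ j.castSucc)) := by
    ext β
    simp only [LIdx, Finset.mem_filter, Finset.mem_univ, true_and, Finset.mem_biUnion,
      Lset_update_last α ℓ]
  have key : x ⟨Function.update α ℓ (Fin.last r), h _⟩ =
      ∑ j : Fin r, x ⟨Function.update α ℓ j.castSucc, h _⟩ := by
    rw [code_eq hx ⟨Function.update α ℓ (Fin.last r), h _⟩, hbi,
      Finset.sum_biUnion hdisj]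
    exact Finset.sum_congr rfl fun j _ =>
      (code_eq hx ⟨Function.update α ℓ j.castSucc, h _⟩).symm
  rw [Fin.sum_univ_castSucc, ← key, CharTwo.add_self_eq_zero]

lemma exists_recover {r m t : ℕ} (α : Fin m → Fin (r + 1)) (ℓ : Fin m)
    (hline : ∀ j : Fin (r + 1), Function.update α ℓ j ∈ Omeg r m t) (hα : α ∈ Omeg r m t) :
    ∃ R : Finset (OmegIdx r m t), IsRecoveringSet (CodeC r m t) ⟨α, hα⟩ R ∧ R.card = r ∧
      ∀ β ∈ R, β.1 ≠ α ∧ ∀ j, j ≠ ℓ → β.1 j = α j := by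
  classical
  set R : Finset (OmegIdx r m t) :=
    (Finset.univ.erase (α ℓ)).image
      (fun j => (⟨Function.update α ℓ j, hline j⟩ : OmegIdx r m t)) with hR
  have hinj : ∀ a b : Fin (r+1), Function.update α ℓ a = Function.update α ℓ b → a = b := by
    intro a b hab
    have := congrFun hab ℓ
    rwa [Function.update_self, Function.update_self] at this
  have hmemR : ∀ β ∈ R, ∃ j : Fin (r+1), j ≠ α ℓ ∧ β.1 = Function.update α ℓ j := by
    intro β hβ
    rw [hR, Finset.mem_image] at hβ
    obtain ⟨j, hj, rfl⟩ := hβ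
    exact ⟨j, Finset.ne_of_mem_erase hj, rfl⟩
  refine ⟨R, ⟨?_, ?_⟩, ?_, ?_⟩
  · -- ⟨α, hα⟩ ∉ R
    intro hmem
    obtain ⟨j, hj, heq⟩ := hmemR _ hmem
    apply hj
    have := congrFun heq.symm ℓ
    rwa [Function.update_self] at this
  · refine ⟨fun _ => 1, fun j _ => one_ne_zero, fun x hx => ?_⟩
    have hsum := line_sum hx α ℓ hline
    rw [← Finset.insert_erase (Finset.mem_univ (α ℓ)), Finset.sum_insert
      (Finset.notMem_erase _ _)] at hsum
    have hα' : x ⟨Function.update α ℓ (α ℓ), hline _⟩ = x ⟨α, hα⟩ := by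
      congr 1
      exact Subtype.ext (Function.update_eq_self ℓ α)
    rw [hα'] at hsum
    have : x ⟨α, hα⟩ = ∑ j ∈ Finset.univ.erase (α ℓ), x ⟨Function.update α ℓ j, hline j⟩ := by
      have h3 := add_eq_zero_iff_eq_neg.mp hsum
      rwa [CharTwo.neg_eq] at h3
    rw [this, hR, Finset.sum_image (fun a ha b hb hab => hinj a b (congrArg Subtype.val hab))]
    simp
  · rw [hR, Finset.card_image_of_injOn (fun a ha b hb hab => hinj a b
      (congrArg Subtype.val hab)), Finset.card_erase_of_mem (Finset.mem_univ _)]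
    simp
  · intro β hβ
    obtain ⟨j, hj, heq⟩ := hmemR _ hβ
    constructor
    · intro hcon
      apply hj
      have h3 : α = Function.update α ℓ j := hcon ▸ heq
      have h4 := congrFun h3 ℓ
      rw [Function.update_self] at h4
      exact h4.symm
    · intro i hiℓ
      rw [heq, Function.update_of_ne hiℓ]

def levk (r m k : ℕ) (α : Fin m → Fin (r + 1)) : ℕ :=
  ∑ ℓ ∈ Finset.univ.filter (fun ℓ : Fin m => (ℓ : ℕ) < k ∧ ((α ℓ) : ℕ) = r), 2^(ℓ:ℕ)

lemma geomSumTwoNat (k : ℕ) : ∑ i ∈ Finset.range k, 2^i = 2^k - 1 := by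
  induction k with
  | zero => simp
  | succ n ihn =>
    rw [Finset.sum_range_succ, ihn]
    have : 0 < 2^n := Nat.pow_pos (by norm_num)
    have h2 : 2^(n+1) = 2^n + 2^n := by ring
    omega

lemma sum_pow_le {m k : ℕ} (S : Finset (Fin m)) (h : ∀ ℓ ∈ S, (ℓ:ℕ) < k) :
    ∑ ℓ ∈ S, 2^(ℓ:ℕ) ≤ 2^k - 1 := by
  have himg : ∑ ℓ ∈ S, 2^(ℓ:ℕ) = ∑ i ∈ S.image (Fin.val), 2^i := by
    rw [Finset.sum_image (fun a _ b _ hab => Fin.val_injective hab)]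
  rw [himg]
  have hsub : S.image Fin.val ⊆ Finset.range k := by
    intro i hi
    rw [Finset.mem_image] at hi
    obtain ⟨ℓ, hℓ, rfl⟩ := hi
    exact Finset.mem_range.mpr (h ℓ hℓ)
  calc ∑ i ∈ S.image Fin.val, 2^i ≤ ∑ i ∈ Finset.range k, 2^i :=
        Finset.sum_le_sum_of_subset hsub
    _ = 2^k - 1 := geomSumTwoNat k

lemma levk_le {r m k : ℕ} (α : Fin m → Fin (r + 1)) : levk r m k α ≤ 2^k - 1 := by
  apply sum_pow_le
  intro ℓ hℓ
  simp only [Finset.mem_filter, Finset.mem_univ, true_and] at hℓ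
  exact hℓ.1

lemma levk_add_le {r m k : ℕ} (α : Fin m → Fin (r + 1)) (ℓ : Fin m) (h1 : (ℓ:ℕ) < k)
    (h2 : ((α ℓ) : ℕ) ≠ r) : levk r m k α + 2^(ℓ:ℕ) ≤ 2^k - 1 := by
  have hnot : ℓ ∉ Finset.univ.filter (fun j : Fin m => (j : ℕ) < k ∧ ((α j) : ℕ) = r) := by
    simp only [Finset.mem_filter, Finset.mem_univ, true_and, not_and]
    intro _; exact h2
  have : levk r m k α + 2^(ℓ:ℕ) = ∑ j ∈ insert ℓ
      (Finset.univ.filter (fun j : Fin m => (j : ℕ) < k ∧ ((α j) : ℕ) = r)), 2^(j:ℕ) := by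
    rw [Finset.sum_insert hnot, levk]; ring
  rw [this]
  apply sum_pow_le
  intro j hj
  rcases Finset.mem_insert.mp hj with rfl | hj'
  · exact h1
  · simp only [Finset.mem_filter, Finset.mem_univ, true_and] at hj'
    exact hj'.1

lemma levk_succ_of_ne {r m k : ℕ} (ℓs : Fin m) (hv : (ℓs : ℕ) = k)
    (α : Fin m → Fin (r + 1))
    (h : ((α ℓs) : ℕ) ≠ r) : levk r m (k+1) α = levk r m k α := by
  unfold levk
  congr 1
  ext ℓ
  simp only [Finset.mem_filter, Finset.mem_univ, true_and]
  constructor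
  · rintro ⟨h1, h2⟩
    refine ⟨?_, h2⟩
    rcases Nat.lt_succ_iff_lt_or_eq.mp h1 with h3 | h3
    · exact h3
    · exact absurd h2 (by rwa [show ℓ = ℓs from Fin.ext (h3.trans hv.symm)])
  · rintro ⟨h1, h2⟩
    exact ⟨by omega, h2⟩

lemma levk_succ_of_eq {r m k : ℕ} (ℓs : Fin m) (hv : (ℓs : ℕ) = k)
    (α : Fin m → Fin (r + 1))
    (h : ((α ℓs) : ℕ) = r) : levk r m (k+1) α = levk r m k α + 2^k := by
  have hins : Finset.univ.filter (fun ℓ : Fin m => (ℓ : ℕ) < k + 1 ∧ ((α ℓ) : ℕ) = r) =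
      insert ℓs (Finset.univ.filter
        (fun ℓ : Fin m => (ℓ : ℕ) < k ∧ ((α ℓ) : ℕ) = r)) := by
    ext ℓ
    simp only [Finset.mem_filter, Finset.mem_univ, true_and, Finset.mem_insert]
    constructor
    · rintro ⟨h1, h2⟩
      rcases Nat.lt_succ_iff_lt_or_eq.mp h1 with h3 | h3
      · exact Or.inr ⟨h3, h2⟩
      · exact Or.inl (Fin.ext (h3.trans hv.symm))
    · rintro (rfl | ⟨h1, h2⟩)
      · exact ⟨by omega, h⟩
      · exact ⟨by omega, h2⟩
  rw [levk, hins, Finset.sum_insert (by simp [hv])]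
  rw [levk, hv]
  omega

lemma arith_pred_succ (a : ℕ) : a ≤ a - 1 + 1 := by omega

lemma arith_split (t c : ℕ) (h : c ≤ t) : t + 1 ≤ (t - c + 1) + c := by omega

lemma arith_double (t k : ℕ) (h : t ≤ 2^(k+1) - 1) : t + 1 ≤ 2^k + 2^k := by
  have h2 : 2^(k+1) = 2^k + 2^k := by ring
  have h3 : 0 < 2^k := Nat.pow_pos (by norm_num)
  omega

lemma card_merge {γ : Type*} [DecidableEq γ] (A B E : Finset γ) (hd : Disjoint A B)
    (hsub : A ∪ B ⊆ E) (a b : ℕ) (ha : a ≤ A.card) (hb : b ≤ B.card) :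
    a + b ≤ E.card := by
  have h1 := Finset.card_le_card hsub
  rw [Finset.card_union_of_disjoint hd] at h1
  have h2 := Nat.add_le_add ha hb
  exact le_trans h2 h1

lemma stuck_card (r m : ℕ) : ∀ k : ℕ, k ≤ m → ∀ t : ℕ, t ≤ 2^k - 1 →
    ∀ E : Finset (Fin m → Fin (r + 1)), E.Nonempty →
    (∀ α ∈ E, levk r m k α ≤ t) →
    (∀ α ∈ E, ∀ ℓ : Fin m, (ℓ:ℕ) < k → (((α ℓ) : ℕ) = r ∨ levk r m k α + 2^(ℓ:ℕ) ≤ t) →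
      ∃ β ∈ E, β ≠ α ∧ ∀ j, j ≠ ℓ → β j = α j) →
    t + 1 ≤ E.card := by
  intro k
  induction k with
  | zero =>
    intro _ t ht E hne _ _
    have ht0 : t = 0 := by simpa using ht
    subst ht0
    simpa using Finset.card_pos.mpr hne
  | succ k ih =>
    intro hk1 t ht E hne hlev hblk
    have hkm : k < m := by omega
    have hp : 0 < 2^k := Nat.pow_pos (by norm_num)
    have hpow : 2^(k+1) = 2^k + 2^k := by ring
    obtain ⟨ℓs, hℓsval⟩ : ∃ ℓs : Fin m, (ℓs : ℕ) = k := ⟨⟨k, hkm⟩, rfl⟩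
    have hℓsne : ∀ ℓ : Fin m, (ℓ:ℕ) < k → ℓs ≠ ℓ := by
      intro ℓ hℓ
      exact Fin.ne_of_val_ne (by rw [hℓsval]; omega)
    by_cases hcase : t < 2^k
    · -- small case: no point uses the top bit
      have hallne : ∀ α ∈ E, ((α ℓs) : ℕ) ≠ r := by
        intro α hα hcon
        have h1 := hlev α hα
        rw [levk_succ_of_eq ℓs hℓsval α hcon] at h1
        omega
      obtain ⟨α₀, hα₀⟩ := hne
      set E' := E.filter (fun α => α ℓs = α₀ ℓs) with hE'
      have hsubE : E' ⊆ E := Finset.filter_subset _ _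
      have hblk' : ∀ α ∈ E', ∀ ℓ : Fin m, (ℓ:ℕ) < k →
          (((α ℓ) : ℕ) = r ∨ levk r m k α + 2^(ℓ:ℕ) ≤ t) →
          ∃ β ∈ E', β ≠ α ∧ ∀ j, j ≠ ℓ → β j = α j := by
        intro α hα ℓ hℓk hadm
        have hαE := hsubE hα
        have hne' : ((α ℓs) : ℕ) ≠ r := by
          rw [(Finset.mem_filter.mp hα).2]; exact hallne α₀ hα₀
        have hadm' : ((α ℓ) : ℕ) = r ∨ levk r m (k+1) α + 2^(ℓ:ℕ) ≤ t := by
          rcases hadm with h | h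
          · exact Or.inl h
          · rw [levk_succ_of_ne ℓs hℓsval α hne']; exact Or.inr h
        obtain ⟨β, hβE, hβne, hβag⟩ := hblk α hαE ℓ (by omega) hadm'
        refine ⟨β, ?_, hβne, hβag⟩
        rw [hE', Finset.mem_filter]
        refine ⟨hβE, ?_⟩
        rw [hβag ℓs (hℓsne ℓ hℓk)]
        exact (Finset.mem_filter.mp hα).2
      have hlev' : ∀ α ∈ E', levk r m k α ≤ t := by
        intro α hα
        rw [← levk_succ_of_ne ℓs hℓsval α (by
          rw [(Finset.mem_filter.mp hα).2]; exact hallne α₀ hα₀)]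
        exact hlev α (hsubE hα)
      exact le_trans (ih (by omega) t (by omega) E'
        ⟨α₀, Finset.mem_filter.mpr ⟨hα₀, rfl⟩⟩ hlev' hblk') (Finset.card_le_card hsubE)
    · -- big case: 2^k ≤ t
      push_neg at hcase
      have key : ∀ c : Fin (r + 1), (c : ℕ) ≠ r →
          (E.filter (fun α => α ℓs = c)).Nonempty →
          2^k ≤ (E.filter (fun α => α ℓs = c)).card := by
        intro c hc hnec
        have hblk' : ∀ α ∈ E.filter (fun α => α ℓs = c), ∀ ℓ : Fin m, (ℓ:ℕ) < k →
            (((α ℓ) : ℕ) = r ∨ levk r m k α + 2^(ℓ:ℕ) ≤ 2^k - 1) →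
            ∃ β ∈ E.filter (fun α => α ℓs = c), β ≠ α ∧ ∀ j, j ≠ ℓ → β j = α j := by
          intro α hα ℓ hℓk _
          have hαE := Finset.filter_subset _ _ hα
          have hαc : α ℓs = c := (Finset.mem_filter.mp hα).2
          have hadm' : ((α ℓ) : ℕ) = r ∨ levk r m (k+1) α + 2^(ℓ:ℕ) ≤ t := by
            by_cases hαℓ : ((α ℓ) : ℕ) = r
            · exact Or.inl hαℓ
            · refine Or.inr ?_
              rw [levk_succ_of_ne ℓs hℓsval α (by rw [hαc]; exact hc)]
              have := levk_add_le α ℓ hℓk hαℓ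
              omega
          obtain ⟨β, hβE, hβne, hβag⟩ := hblk α hαE ℓ (by omega) hadm'
          refine ⟨β, ?_, hβne, hβag⟩
          rw [Finset.mem_filter]
          refine ⟨hβE, ?_⟩
          rw [hβag ℓs (hℓsne ℓ hℓk), hαc]
        exact le_trans (arith_pred_succ (2^k))
          (ih (by omega) (2^k - 1) le_rfl (E.filter (fun α => α ℓs = c)) hnec
            (fun α _ => levk_le α) hblk')
      by_cases hA : (E.filter (fun α => ((α ℓs) : ℕ) = r)).Nonempty
      · -- A nonempty; find a B-slice via vertical blocker from a top point
        obtain ⟨a, haA⟩ := hA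
        have haE := Finset.filter_subset _ _ haA
        have har : ((a ℓs) : ℕ) = r := (Finset.mem_filter.mp haA).2
        obtain ⟨β, hβE, hβne, hβag⟩ := hblk a haE ℓs (by rw [hℓsval]; omega) (Or.inl har)
        have hβℓs : β ℓs ≠ a ℓs := by
          intro hcon
          apply hβne
          funext j
          by_cases hj : j = ℓs
          · rw [hj, hcon]
          · exact hβag j hj
        have hβr : ((β ℓs) : ℕ) ≠ r := by
          intro hcon
          exact hβℓs (Fin.ext (hcon.trans har.symm))
        -- A is stuck at threshold t - 2^k
        have hlevA : ∀ α ∈ E.filter (fun α => ((α ℓs) : ℕ) = r),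
            levk r m k α ≤ t - 2^k := by
          intro α hα
          have h1 := hlev α (Finset.filter_subset _ _ hα)
          rw [levk_succ_of_eq ℓs hℓsval α (Finset.mem_filter.mp hα).2] at h1
          omega
        have hblkA : ∀ α ∈ E.filter (fun α => ((α ℓs) : ℕ) = r), ∀ ℓ : Fin m, (ℓ:ℕ) < k →
            (((α ℓ) : ℕ) = r ∨ levk r m k α + 2^(ℓ:ℕ) ≤ t - 2^k) →
            ∃ γ ∈ E.filter (fun α => ((α ℓs) : ℕ) = r), γ ≠ α ∧ ∀ j, j ≠ ℓ → γ j = α j := by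
          intro α hα ℓ hℓk hadm
          have hαE := Finset.filter_subset _ _ hα
          have hαr : ((α ℓs) : ℕ) = r := (Finset.mem_filter.mp hα).2
          have hadm' : ((α ℓ) : ℕ) = r ∨ levk r m (k+1) α + 2^(ℓ:ℕ) ≤ t := by
            rcases hadm with h | h
            · exact Or.inl h
            · refine Or.inr ?_
              rw [levk_succ_of_eq ℓs hℓsval α hαr]
              omega
          obtain ⟨γ, hγE, hγne, hγag⟩ := hblk α hαE ℓ (by omega) hadm'
          refine ⟨γ, ?_, hγne, hγag⟩
          rw [Finset.mem_filter]
          refine ⟨hγE, ?_⟩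
          rw [hγag ℓs (hℓsne ℓ hℓk)]
          exact hαr
        have hAcard := ih (by omega) (t - 2^k) (by omega)
          (E.filter (fun α => ((α ℓs) : ℕ) = r)) ⟨a, haA⟩ hlevA hblkA
        have hkey := key (β ℓs) hβr ⟨β, Finset.mem_filter.mpr ⟨hβE, rfl⟩⟩
        have hdisj : Disjoint (E.filter (fun α => ((α ℓs) : ℕ) = r))
            (E.filter (fun α => α ℓs = β ℓs)) := by
          rw [Finset.disjoint_left]
          intro γ h1 h2
          apply hβr
          rw [← (Finset.mem_filter.mp h2).2]
          exact (Finset.mem_filter.mp h1).2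
        have hsub : (E.filter (fun α => ((α ℓs) : ℕ) = r)) ∪
            (E.filter (fun α => α ℓs = β ℓs)) ⊆ E := by
          intro γ hγ
          rcases Finset.mem_union.mp hγ with h | h
          · exact Finset.filter_subset _ _ h
          · exact Finset.filter_subset _ _ h
        exact le_trans (arith_split t (2^k) hcase)
          (card_merge _ _ E hdisj hsub _ _ hAcard hkey)
      · -- A empty: at least two B-slices
        obtain ⟨α₀, hα₀⟩ := hne
        have hnoA : ∀ α ∈ E, ((α ℓs) : ℕ) ≠ r := by
          intro α hα hcon
          exact hA ⟨α, Finset.mem_filter.mpr ⟨hα, hcon⟩⟩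
        set Bc := E.filter (fun α => α ℓs = α₀ ℓs) with hBc
        have hBcne : Bc.Nonempty := ⟨α₀, Finset.mem_filter.mpr ⟨hα₀, rfl⟩⟩
        obtain ⟨β₀, hβ₀Bc, hβ₀min⟩ := Finset.exists_min_image Bc (levk r m k) hBcne
        have hβ₀E := Finset.filter_subset _ _ hβ₀Bc
        have hβ₀c : β₀ ℓs = α₀ ℓs := (Finset.mem_filter.mp hβ₀Bc).2
        have hβ₀lev : levk r m k β₀ = 0 := by
          by_contra hne0
          have hFne : (Finset.univ.filter
              (fun ℓ : Fin m => (ℓ : ℕ) < k ∧ ((β₀ ℓ) : ℕ) = r)).Nonempty := by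
            rw [Finset.nonempty_iff_ne_empty]
            intro hemp
            exact hne0 (by rw [levk, hemp, Finset.sum_empty])
          obtain ⟨ℓ, hℓF⟩ := hFne
          simp only [Finset.mem_filter, Finset.mem_univ, true_and] at hℓF
          obtain ⟨hℓk, hℓr⟩ := hℓF
          obtain ⟨γ, hγE, hγne, hγag⟩ := hblk β₀ hβ₀E ℓ (by omega) (Or.inl hℓr)
          have hγℓ : γ ℓ ≠ β₀ ℓ := by
            intro hcon
            apply hγne
            funext j
            by_cases hj : j = ℓ
            · rw [hj, hcon]
            · exact hγag j hj
          have hγℓr : ((γ ℓ) : ℕ) ≠ r := by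
            intro hcon
            exact hγℓ (Fin.ext (hcon.trans hℓr.symm))
          have hγBc : γ ∈ Bc := by
            rw [hBc, Finset.mem_filter]
            refine ⟨hγE, ?_⟩
            rw [hγag ℓs (hℓsne ℓ hℓk), hβ₀c]
          have hγfil : Finset.univ.filter (fun j : Fin m => (j : ℕ) < k ∧ ((γ j) : ℕ) = r) =
              (Finset.univ.filter
                (fun j : Fin m => (j : ℕ) < k ∧ ((β₀ j) : ℕ) = r)).erase ℓ := by
            ext j
            simp only [Finset.mem_erase, Finset.mem_filter, Finset.mem_univ, true_and]
            constructor
            · rintro ⟨hjk, hjr⟩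
              have hjℓ : j ≠ ℓ := by
                intro hcon
                rw [hcon] at hjr
                exact hγℓr hjr
              exact ⟨hjℓ, hjk, by rwa [← hγag j hjℓ]⟩
            · rintro ⟨hjℓ, hjk, hjr⟩
              exact ⟨hjk, by rwa [hγag j hjℓ]⟩
          have hmem : ℓ ∈ Finset.univ.filter
              (fun j : Fin m => (j : ℕ) < k ∧ ((β₀ j) : ℕ) = r) := by
            simp only [Finset.mem_filter, Finset.mem_univ, true_and]
            exact ⟨hℓk, hℓr⟩
          have hlt : levk r m k γ < levk r m k β₀ := by
            rw [levk, hγfil, levk]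
            exact Finset.sum_lt_sum_of_subset (Finset.erase_subset _ _) hmem
              (Finset.notMem_erase _ _) (Nat.pow_pos (by norm_num))
              (fun _ _ _ => Nat.zero_le _)
          exact absurd (hβ₀min γ hγBc) (by omega)
        have hβ₀r : ((β₀ ℓs) : ℕ) ≠ r := hnoA β₀ hβ₀E
        have hadm : ((β₀ ℓs) : ℕ) = r ∨ levk r m (k+1) β₀ + 2^((ℓs : Fin m):ℕ) ≤ t := by
          refine Or.inr ?_
          rw [levk_succ_of_ne ℓs hℓsval β₀ hβ₀r, hβ₀lev, hℓsval]
          omega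
        obtain ⟨δ, hδE, hδne, hδag⟩ := hblk β₀ hβ₀E ℓs (by rw [hℓsval]; omega) hadm
        have hδℓs : δ ℓs ≠ β₀ ℓs := by
          intro hcon
          apply hδne
          funext j
          by_cases hj : j = ℓs
          · rw [hj, hcon]
          · exact hδag j hj
        have hδr : ((δ ℓs) : ℕ) ≠ r := hnoA δ hδE
        have hk1c := key (α₀ ℓs) (hnoA α₀ hα₀) hBcne
        have hk2c := key (δ ℓs) hδr ⟨δ, Finset.mem_filter.mpr ⟨hδE, rfl⟩⟩
        have hdisj : Disjoint (E.filter (fun α => α ℓs = α₀ ℓs))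
            (E.filter (fun α => α ℓs = δ ℓs)) := by
          rw [Finset.disjoint_left]
          intro γ h1 h2
          apply hδℓs
          rw [← (Finset.mem_filter.mp h2).2, (Finset.mem_filter.mp h1).2, hβ₀c]
        have hsub : (E.filter (fun α => α ℓs = α₀ ℓs)) ∪
            (E.filter (fun α => α ℓs = δ ℓs)) ⊆ E := by
          intro γ hγ
          rcases Finset.mem_union.mp hγ with h | h
          · exact Finset.filter_subset _ _ h
          · exact Finset.filter_subset _ _ h
        exact le_trans (arith_double t k ht)
          (card_merge _ _ E hdisj hsub _ _ hk1c hk2c)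

lemma lev_eq_levk {r m : ℕ} (α : Fin m → Fin (r + 1)) : lev r m α = levk r m m α := by
  rw [lev, levk]
  congr 1
  ext ℓ
  simp only [Uset, Finset.mem_filter, Finset.mem_univ, true_and]
  exact ⟨fun h => ⟨ℓ.isLt, h⟩, fun h => h.2⟩

lemma Uset_update {r m : ℕ} (α : Fin m → Fin (r + 1)) (ℓ : Fin m) (j : Fin (r + 1)) :
    Uset r m (Function.update α ℓ j) =
      if (j : ℕ) = r then insert ℓ (Uset r m α) else (Uset r m α).erase ℓ := by
  ext i
  by_cases hj : (j : ℕ) = r <;>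
    simp only [Uset, Finset.mem_filter, Finset.mem_univ, true_and, hj, if_true, if_false,
      Finset.mem_insert, Finset.mem_erase]
  · by_cases hiℓ : i = ℓ
    · subst hiℓ
      rw [Function.update_self]
      simp [hj]
    · rw [Function.update_of_ne hiℓ]
      constructor
      · exact Or.inr
      · rintro (rfl | h)
        · exact absurd rfl hiℓ
        · exact h
  · by_cases hiℓ : i = ℓ
    · subst hiℓ
      rw [Function.update_self]
      simp [hj]
    · rw [Function.update_of_ne hiℓ]
      exact ⟨fun h => ⟨hiℓ, h⟩, fun h => h.2⟩

lemma lev_update_le {r m t : ℕ} (α : Fin m → Fin (r + 1)) (ℓ : Fin m)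
    (hαt : lev r m α ≤ t)
    (h : ((α ℓ) : ℕ) = r ∨ lev r m α + 2^(ℓ:ℕ) ≤ t) (j : Fin (r + 1)) :
    lev r m (Function.update α ℓ j) ≤ t := by
  rw [lev, Uset_update]
  by_cases hj : (j : ℕ) = r
  · rw [if_pos hj]
    by_cases hℓU : ℓ ∈ Uset r m α
    · rw [Finset.insert_eq_self.mpr hℓU]
      exact hαt
    · rw [Finset.sum_insert hℓU]
      rcases h with h | h
      · exact absurd (by simpa [Uset] using h) hℓU
      · rw [lev] at h
        omega
  · rw [if_neg hj]
    refine le_trans (Finset.sum_le_sum_of_subset (Finset.erase_subset _ _)) ?_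
    rw [← lev]
    exact hαt

lemma exists_repairable {r m t : ℕ} (ht2 : t ≤ 2^m - 1)
    (E : Finset (OmegIdx r m t)) (hE : E.card ≤ t) (hne : E.Nonempty) :
    ∃ a ∈ E, ∃ R : Finset (OmegIdx r m t), IsRecoveringSet (CodeC r m t) a R ∧
      R.card ≤ r ∧ ∀ b ∈ R, b ∉ E := by
  classical
  have hlev : ∀ β ∈ E.image Subtype.val, levk r m m β ≤ t := by
    intro β hβ
    rw [Finset.mem_image] at hβ
    obtain ⟨b, _, rfl⟩ := hβ
    rw [← lev_eq_levk]
    exact (mem_Omeg_iff ht2 b.1).mp b.2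
  have hnostuck : ¬(∀ β ∈ E.image Subtype.val, ∀ ℓ : Fin m, (ℓ:ℕ) < m →
      (((β ℓ) : ℕ) = r ∨ levk r m m β + 2^(ℓ:ℕ) ≤ t) →
      ∃ γ ∈ E.image Subtype.val, γ ≠ β ∧ ∀ i, i ≠ ℓ → γ i = β i) := by
    intro hstuck
    have h1 := stuck_card r m m le_rfl t ht2 (E.image Subtype.val)
      (hne.image _) hlev hstuck
    have h2 : (E.image Subtype.val).card = E.card :=
      Finset.card_image_of_injective _ Subtype.val_injective
    omega
  push_neg at hnostuck
  obtain ⟨β, hβmem, ℓ, _, hadm, hnoblk⟩ := hnostuck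
  rw [Finset.mem_image] at hβmem
  obtain ⟨a, haE, rfl⟩ := hβmem
  have hadm' : ((a.1 ℓ) : ℕ) = r ∨ lev r m a.1 + 2^(ℓ:ℕ) ≤ t := by
    rwa [lev_eq_levk]
  have hline : ∀ j : Fin (r + 1), Function.update a.1 ℓ j ∈ Omeg r m t := by
    intro j
    rw [mem_Omeg_iff ht2]
    exact lev_update_le a.1 ℓ ((mem_Omeg_iff ht2 a.1).mp a.2) hadm' j
  obtain ⟨R, hrec, hcard, hprop⟩ := exists_recover a.1 ℓ hline a.2
  refine ⟨a, haE, R, hrec, le_of_eq hcard, ?_⟩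
  intro b hbR hbE
  obtain ⟨hbne, hbag⟩ := hprop b hbR
  obtain ⟨i, hiℓ, hbad⟩ := hnoblk b.1 (Finset.mem_image_of_mem _ hbE) hbne
  exact hbad (hbag i hiℓ)

lemma slrc_main {r m t : ℕ} (ht2 : t ≤ 2^m - 1) :
    ∀ n : ℕ, ∀ E : Finset (OmegIdx r m t), E.card ≤ t → E.card ≤ n →
    ∃ L : List (OmegIdx r m t), L.Nodup ∧ L.toFinset = E ∧
      ∀ ℓ : Fin L.length, ∃ R : Finset (OmegIdx r m t),
        IsRecoveringSet (CodeC r m t) (L.get ℓ) R ∧ R.card ≤ r ∧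
        R ⊆ Eᶜ ∪ (L.take ℓ.1).toFinset := by
  intro n
  induction n with
  | zero =>
    intro E _ hEn
    have : E = ∅ := Finset.card_eq_zero.mp (by omega)
    subst this
    exact ⟨[], List.nodup_nil, by simp, fun ℓ => absurd ℓ.isLt (by simp)⟩
  | succ n ihn =>
    intro E hEt hEn
    by_cases hE : E.Nonempty
    · obtain ⟨a, haE, R, hrec, hRcard, hRE⟩ := exists_repairable ht2 E hEt hE
      have hcard : (E.erase a).card = E.card - 1 := Finset.card_erase_of_mem haE
      obtain ⟨L', hnd, htf, hrecs⟩ := ihn (E.erase a) (by omega) (by omega)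
      have haL' : a ∉ L' := by
        intro hcon
        have : a ∈ E.erase a := htf ▸ List.mem_toFinset.mpr hcon
        exact (Finset.notMem_erase a E) this
      refine ⟨a :: L', List.nodup_cons.mpr ⟨haL', hnd⟩, ?_, ?_⟩
      · rw [List.toFinset_cons, htf, Finset.insert_erase haE]
      · intro ℓ
        induction ℓ using Fin.cases with
        | zero =>
          refine ⟨R, hrec, hRcard, ?_⟩
          intro b hb
          simp only [Fin.val_zero, List.take_zero, List.toFinset_nil, Finset.mem_union,
            Finset.mem_compl]
          exact Or.inl (hRE b hb)
        | succ i =>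
          obtain ⟨Ri, hri, hci, hsi⟩ := hrecs i
          refine ⟨Ri, hri, hci, ?_⟩
          intro b hb
          have := hsi hb
          simp only [Finset.mem_union, Finset.mem_compl, Finset.mem_erase,
            List.mem_toFinset] at this ⊢
          simp only [Fin.val_succ, List.take_succ_cons, List.toFinset_cons,
            Finset.mem_insert, List.mem_toFinset, List.mem_cons]
          rcases this with h | h
          · by_cases hba : b = a
            · exact Or.inr (Or.inl hba)
            · exact Or.inl (fun hbE => h ⟨hba, hbE⟩)
          · exact Or.inr (Or.inr h)
    · refine ⟨[], List.nodup_nil, ?_, fun ℓ => absurd ℓ.isLt (by simp)⟩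
      rw [Finset.not_nonempty_iff_eq_empty] at hE
      simp [hE]

lemma slrc {r m t : ℕ} (ht2 : t ≤ 2^m - 1) : IsSLRC (CodeC r m t) r t := by
  intro E hE
  exact slrc_main ht2 E.card E hE le_rfl

lemma filter_lt_card {r : ℕ} :
    (Finset.univ.filter (fun j : Fin (r + 1) => (j : ℕ) < r)).card = r := by
  have : Finset.univ.filter (fun j : Fin (r + 1) => (j : ℕ) < r) =
      Finset.univ.erase (Fin.last r) := by
    ext j
    simp only [Finset.mem_filter, Finset.mem_univ, true_and, Finset.mem_erase]
    have hle : (j : ℕ) ≤ r := Nat.lt_succ_iff.mp j.isLt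
    constructor
    · intro h
      refine ⟨?_, trivial⟩
      intro hcon
      rw [hcon] at h
      simp [Fin.val_last] at h
    · rintro ⟨h, -⟩
      
      rcases Nat.lt_or_ge (j : ℕ) r with h' | h'
      · exact h'
      · exact absurd (Fin.ext (by rw [Fin.val_last]; omega)) h
  rw [this, Finset.card_erase_of_mem (Finset.mem_univ _), Finset.card_univ, Fintype.card_fin]
  omega

lemma Gam_eq_piFinset {r m : ℕ} (s : ℕ) :
    Gam r m s = Fintype.piFinset (fun i : Fin m =>
      if i ∈ suppm m s then ({Fin.last r} : Finset (Fin (r+1)))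
      else Finset.univ.filter (fun j : Fin (r + 1) => (j : ℕ) < r)) := by
  ext α
  simp only [Gam, Finset.mem_filter, Finset.mem_univ, true_and, Fintype.mem_piFinset]
  constructor
  · intro h i
    by_cases hi : i ∈ suppm m s
    · rw [if_pos hi, Finset.mem_singleton]
      have : i ∈ Uset r m α := h ▸ hi
      simp only [Uset, Finset.mem_filter, Finset.mem_univ, true_and] at this
      exact Fin.ext (by rw [this, Fin.val_last])
    · rw [if_neg hi, Finset.mem_filter]
      refine ⟨Finset.mem_univ _, ?_⟩
      have : i ∉ Uset r m α := fun hc => hi (h ▸ hc)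
      simp only [Uset, Finset.mem_filter, Finset.mem_univ, true_and] at this
      have hle : ((α i) : ℕ) ≤ r := Nat.lt_succ_iff.mp (α i).isLt
      omega
  · intro h
    ext i
    simp only [Uset, Finset.mem_filter, Finset.mem_univ, true_and]
    have hi := h i
    by_cases his : i ∈ suppm m s
    · rw [if_pos his, Finset.mem_singleton] at hi
      rw [hi, Fin.val_last]
      simp [his]
    · rw [if_neg his, Finset.mem_filter] at hi
      constructor
      · intro hc; omega
      · intro hc; exact absurd hc his

lemma Gam_card {r m : ℕ} (s : ℕ) :
    (Gam r m s).card = r ^ (m - (suppm m s).card) := by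
  rw [Gam_eq_piFinset, Fintype.card_piFinset]
  have : ∀ i : Fin m, (if i ∈ suppm m s then ({Fin.last r} : Finset (Fin (r+1)))
      else Finset.univ.filter (fun j : Fin (r + 1) => (j : ℕ) < r)).card =
      if i ∈ suppm m s then 1 else r := by
    intro i
    by_cases hi : i ∈ suppm m s
    · rw [if_pos hi, if_pos hi, Finset.card_singleton]
    · rw [if_neg hi, if_neg hi, filter_lt_card]
  rw [Finset.prod_congr rfl (fun i _ => this i), Finset.prod_ite, Finset.prod_const,
    Finset.prod_const, one_pow, one_mul]
  congr 1
  rw [Finset.filter_not, Finset.filter_mem_eq_inter, Finset.univ_inter,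
    Finset.card_sdiff_of_subset (Finset.subset_univ _), Finset.card_univ, Fintype.card_fin]

lemma Gam_disjoint {r m : ℕ} {s s' : ℕ} (hs : s < 2^m) (hs' : s' < 2^m) (hne : s ≠ s') :
    Disjoint (Gam r m s) (Gam r m s') := by
  rw [Finset.disjoint_left]
  intro α h1 h2
  simp only [Gam, Finset.mem_filter, Finset.mem_univ, true_and] at h1 h2
  apply hne
  rw [← sum_suppm s hs, ← sum_suppm s' hs', ← h1, ← h2]

lemma Omeg_card {r m t : ℕ} (ht2 : t ≤ 2^m - 1) :
    (Omeg r m t).card = ∑ s ∈ Finset.range (t + 1), r ^ (m - (suppm m s).card) := by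
  have hpos : 0 < 2^m := Nat.pow_pos (by norm_num)
  rw [Omeg, Finset.card_biUnion]
  · exact Finset.sum_congr rfl (fun s _ => Gam_card s)
  · intro s hs s' hs' hne
    rw [Finset.mem_coe, Finset.mem_range] at hs hs'
    exact Gam_disjoint (by omega) (by omega) hne

lemma OmegIdx_card {r m t : ℕ} (ht2 : t ≤ 2^m - 1) :
    Fintype.card (OmegIdx r m t) = ∑ s ∈ Finset.range (t + 1), r ^ (m - (suppm m s).card) := by
  rw [← Omeg_card ht2]
  exact Fintype.card_coe _

lemma Lset_mem_Omeg0 {r m : ℕ} {α β : Fin m → Fin (r + 1)} (h : β ∈ Lset r m α) :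
    β ∈ Omeg r m 0 := by
  simp only [Lset, Finset.mem_filter, Finset.mem_univ, true_and] at h
  exact (mem_Omeg0_iff β).mpr h.1

lemma LIdx_image {r m t : ℕ} (α : Fin m → Fin (r + 1)) :
    (LIdx r m t α).image Subtype.val = Lset r m α := by
  ext β
  simp only [Finset.mem_image, LIdx, Finset.mem_filter, Finset.mem_univ, true_and]
  constructor
  · rintro ⟨γ, hγ, rfl⟩
    exact hγ
  · intro hβ
    exact ⟨⟨β, Omeg0_subset (Lset_mem_Omeg0 hβ)⟩, hβ, rfl⟩

lemma sum_LIdx {r m t : ℕ} (α : Fin m → Fin (r + 1)) (f : (Fin m → Fin (r + 1)) → ZMod 2) :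
    ∑ γ ∈ LIdx r m t α, f γ.1 = ∑ β ∈ Lset r m α, f β := by
  rw [← LIdx_image α, Finset.sum_image]
  intro a _ b _ hab
  exact Subtype.ext hab

def resMap (r m t : ℕ) : (CodeC r m t) →ₗ[ZMod 2] (OmegIdx r m 0 → ZMod 2) where
  toFun x := fun β => x.1 ⟨β.1, Omeg0_subset β.2⟩
  map_add' x y := rfl
  map_smul' c x := rfl

lemma resMap_bijective (r m t : ℕ) (ht2 : t ≤ 2^m - 1) :
    Function.Bijective (resMap r m t) := by
  classical
  constructor
  · rw [injective_iff_map_eq_zero]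
    intro x hx
    ext α
    show x.1 α = 0
    by_cases h0 : α.1 ∈ Omeg r m 0
    · have := congrFun hx ⟨α.1, h0⟩
      simpa [resMap] using this
    · rw [code_eq x.2 α]
      apply Finset.sum_eq_zero
      intro β hβ
      simp only [LIdx, Finset.mem_filter, Finset.mem_univ, true_and] at hβ
      have hβ0 := Lset_mem_Omeg0 hβ
      have := congrFun hx ⟨β.1, hβ0⟩
      simpa [resMap] using this
  · intro y
    set Y : (Fin m → Fin (r + 1)) → ZMod 2 :=
      fun β => if h : β ∈ Omeg r m 0 then y ⟨β, h⟩ else 0 with hY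
    set x : OmegIdx r m t → ZMod 2 := fun α => ∑ β ∈ Lset r m α.1, Y β with hx
    have hxC : x ∈ CodeC r m t := by
      intro α hα
      show ∑ β ∈ Lset r m α.1, Y β = _
      have : ∀ γ ∈ LIdx r m t α.1, x γ = Y γ.1 := by
        intro γ hγ
        simp only [LIdx, Finset.mem_filter, Finset.mem_univ, true_and] at hγ
        simp only [Lset, Finset.mem_filter, Finset.mem_univ, true_and] at hγ
        show ∑ β ∈ Lset r m γ.1, Y β = Y γ.1
        rw [Lset_self γ.1 hγ.1, Finset.sum_singleton]
      rw [Finset.sum_congr rfl this, sum_LIdx α.1 Y]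
    refine ⟨⟨x, hxC⟩, ?_⟩
    funext β
    show x ⟨β.1, Omeg0_subset β.2⟩ = y β
    have hall := (mem_Omeg0_iff β.1).mp β.2
    show ∑ γ ∈ Lset r m β.1, Y γ = y β
    rw [Lset_self β.1 hall, Finset.sum_singleton, hY]
    simp only [β.2, dif_pos]
lemma suppm_zero {m : ℕ} : suppm m 0 = ∅ := by
  ext i
  simp [suppm]

lemma finrank_CodeC {r m t : ℕ} (ht2 : t ≤ 2^m - 1) :
    Module.finrank (ZMod 2) (CodeC r m t) = r ^ m := by
  have e := LinearEquiv.ofBijective (resMap r m t) (resMap_bijective r m t ht2)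
  rw [LinearEquiv.finrank_eq e, Module.finrank_pi (ZMod 2)]
  have := OmegIdx_card (r := r) (m := m) (t := 0) (by positivity)
  rw [this]
  simp [suppm_zero]

lemma rate_eq {r m t : ℕ} (hr : 2 ≤ r) (ht2 : t ≤ 2^m - 1) :
    ((r : ℚ) ^ m) / (Fintype.card (OmegIdx r m t)) =
      (∑ s ∈ Finset.range (t + 1), ((r : ℚ) ^ (suppm m s).card)⁻¹)⁻¹ := by
  have hr0 : (r : ℚ) ≠ 0 := by
    have : (0:ℚ) < (r:ℚ) := by exact_mod_cast (by omega : 0 < r)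
    exact ne_of_gt this
  have hrm : (r : ℚ) ^ m ≠ 0 := pow_ne_zero _ hr0
  have hn : ((Fintype.card (OmegIdx r m t)) : ℚ) =
      (r : ℚ) ^ m * ∑ s ∈ Finset.range (t + 1), ((r : ℚ) ^ (suppm m s).card)⁻¹ := by
    rw [OmegIdx_card ht2]
    push_cast
    rw [Finset.mul_sum]
    apply Finset.sum_congr rfl
    intro s _
    have hc : (suppm m s).card ≤ m := Finset.card_le_univ _ |>.trans (by simp)
    rw [pow_sub₀ (r:ℚ) hr0 hc]
  rw [hn, div_mul_cancel_left₀ hrm]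


/-- Theorem 2: `C_t^{(m)}` is an `(n, k, r, t)`-SLRC with
`n = |Ω_t^{(m)}| = ∑_{s=0}^{t} r^{m - |supp_m(s)|}` and `k = r^m`; hence its rate is
`k/n = 1 / ∑_{s=0}^{t} r^{-|supp_m(s)|}`. -/
theorem codeC_is_SLRC (r m t : ℕ) (hr : 2 ≤ r) (ht1 : 1 ≤ t) (ht2 : t ≤ 2 ^ m - 1) :
    IsSLRC (CodeC r m t) r t ∧
    Fintype.card (OmegIdx r m t) = ∑ s ∈ Finset.range (t + 1), r ^ (m - (suppm m s).card) ∧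
    Module.finrank (ZMod 2) (CodeC r m t) = r ^ m ∧
    ((r : ℚ) ^ m) / (Fintype.card (OmegIdx r m t)) =
      (∑ s ∈ Finset.range (t + 1), ((r : ℚ) ^ (suppm m s).card)⁻¹)⁻¹ :=
  ⟨slrc ht2, OmegIdx_card ht2, finrank_CodeC ht2, rate_eq hr ht2⟩
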